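/- Let k : ℝ → ℝ be a continuous function supported in [0, 1], define k̃ : ℝ → ℝ by k̃(r) = 0 for r < 0 and k̃(r) = −∫_r^∞ k(s) ds for r ≥ 0, and let h : [−1, ∞) → ℝ be continuous. Define, for t ≥ 0, (S h)(t) = ∫_{−1}^{∞} h(s) k(t − s) ds and (S̃ h)(t) = ∫_{−1}^{∞} h(s) k̃(t − s) ds. Then S̃ h is differentiable on (0, ∞) and for every t > 0, (d/dt)(S̃ h)(t) = (S h)(t) − h(t). -/

import Mathlib

open MeasureTheory Filter Metric Set
open scoped Topology

/-- **The relation `(S − I) h = (d/dt)(S̃ h)`**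
(eqns. (relation widetilde S w S), (defn of widetilde S op)): with `k` continuous,
supported in `[0,1]` and of unit mass, `k̃(r) = 0` for `r < 0` and
`k̃(r) = −∫_r^∞ k` for `r ≥ 0`, and `h` continuous on `[−1, ∞)`, the function
`(S̃ h)(t) = ∫_{−1}^∞ h(s) k̃(t−s) ds` is differentiable on `(0, ∞)` with
`(d/dt)(S̃ h)(t) = (S h)(t) − h(t)`, where `(S h)(t) = ∫_{−1}^∞ h(s) k(t−s) ds`. -/
theorem Stilde_derivative
    (k : ℝ → ℝ) (hk_cont : Continuous k)
    (hk_supp : Function.support k ⊆ Set.Icc 0 1)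
    (hk_mass : (∫ s in (0:ℝ)..1, k s) = 1)
    (ktilde : ℝ → ℝ)
    (hkt : ∀ r : ℝ, ktilde r = if r < 0 then 0 else -∫ s in Set.Ioi r, k s)
    (h : ℝ → ℝ) (hh : ContinuousOn h (Set.Ici (-1 : ℝ))) :
    ∀ t : ℝ, 0 < t →
      HasDerivAt (fun τ => ∫ s in Set.Ioi (-1 : ℝ), h s * ktilde (τ - s))
        ((∫ s in Set.Ioi (-1 : ℝ), h s * k (t - s)) - h t) t := by
  intro t ht
  -- k vanishes strictly outside [0,1]
  have hk0 : ∀ r : ℝ, r < 0 ∨ 1 < r → k r = 0 := by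
    intro r hr
    by_contra hne
    have := hk_supp (by simpa [Function.mem_support] using hne)
    simp only [Set.mem_Icc] at this
    rcases hr with hr | hr
    · linarith [this.1]
    · linarith [this.2]
  -- by continuity, k vanishes on (-∞,0] and [1,∞)
  have hk_le : ∀ r : ℝ, r ≤ 0 → k r = 0 := by
    intro r hr
    rcases lt_or_eq_of_le hr with hlt | heq
    · exact hk0 r (Or.inl hlt)
    · subst heq
      have h1 : Tendsto k (𝓝[<] (0:ℝ)) (𝓝 (k 0)) :=
        (hk_cont.continuousAt.continuousWithinAt).tendsto
      have h2 : Tendsto k (𝓝[<] (0:ℝ)) (𝓝 0) := by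
        apply Tendsto.congr' _ tendsto_const_nhds
        filter_upwards [self_mem_nhdsWithin] with x hx
        exact (hk0 x (Or.inl hx)).symm
      exact tendsto_nhds_unique h1 h2
  have hk_ge : ∀ r : ℝ, 1 ≤ r → k r = 0 := by
    intro r hr
    rcases lt_or_eq_of_le hr with hlt | heq
    · exact hk0 r (Or.inr hlt)
    · subst heq
      have h1 : Tendsto k (𝓝[>] (1:ℝ)) (𝓝 (k 1)) :=
        (hk_cont.continuousAt.continuousWithinAt).tendsto
      have h2 : Tendsto k (𝓝[>] (1:ℝ)) (𝓝 0) := by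
        apply Tendsto.congr' _ tendsto_const_nhds
        filter_upwards [self_mem_nhdsWithin] with x hx
        exact (hk0 x (Or.inr hx)).symm
      exact tendsto_nhds_unique h1 h2
  have hkcs : HasCompactSupport k :=
    HasCompactSupport.intro isCompact_Icc (fun x hx => by
      by_contra hne
      exact hx (hk_supp (by simpa [Function.mem_support] using hne)))
  have hkint : Integrable k := hk_cont.integrable_of_hasCompactSupport hkcs
  -- the antiderivative g of k
  set g : ℝ → ℝ := fun r => ∫ u in (0:ℝ)..r, k u with hg_def
  have hg_deriv : ∀ r : ℝ, HasDerivAt g (k r) r := fun r =>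
    intervalIntegral.integral_hasDerivAt_right (hkint.intervalIntegrable)
      (hk_cont.stronglyMeasurableAtFilter _ _) hk_cont.continuousAt
  have hg_cont : Continuous g := by
    apply continuous_iff_continuousAt.2
    exact fun r => (hg_deriv r).continuousAt
  have hg0 : ∀ r : ℝ, r ≤ 0 → g r = 0 := by
    intro r hr
    have : EqOn k 0 (Set.uIcc 0 r) := by
      intro x hx
      rw [Set.uIcc_of_ge hr] at hx
      exact hk_le x hx.2
    simp [hg_def, intervalIntegral.integral_congr this]
  have hg1 : ∀ r : ℝ, 1 ≤ r → g r = 1 := by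
    intro r hr
    have hsplit : (∫ u in (0:ℝ)..1, k u) + (∫ u in (1:ℝ)..r, k u) = g r :=
      intervalIntegral.integral_add_adjacent_intervals (a := 0) (b := 1) (c := r)
        (hkint.intervalIntegrable) (hkint.intervalIntegrable)
    have hz : (∫ u in (1:ℝ)..r, k u) = 0 := by
      have : EqOn k 0 (Set.uIcc 1 r) := by
        intro x hx
        rw [Set.uIcc_of_le hr] at hx
        exact hk_ge x hx.1
      simp [intervalIntegral.integral_congr this]
    rw [hk_mass, hz] at hsplit
    linarith
  -- ktilde r = g r - 1 for r ≥ 0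
  have hkt_nonneg : ∀ r : ℝ, 0 ≤ r → ktilde r = g r - 1 := by
    intro r hr
    rw [hkt r, if_neg (not_lt.2 hr)]
    have hU : Set.Ioc r (r+1) ∪ Set.Ioi (r+1) = Set.Ioi r :=
      Set.Ioc_union_Ioi_eq_Ioi (by linarith)
    have hsplit : (∫ s in Set.Ioi r, k s)
        = (∫ s in Set.Ioc r (r+1), k s) + ∫ s in Set.Ioi (r+1), k s := by
      rw [← hU]
      exact MeasureTheory.setIntegral_union (Set.Ioc_disjoint_Ioi le_rfl)
        measurableSet_Ioi hkint.integrableOn hkint.integrableOn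
    have hz : (∫ s in Set.Ioi (r+1), k s) = 0 := by
      rw [MeasureTheory.setIntegral_congr_fun measurableSet_Ioi
        (g := fun _ => (0:ℝ)) (fun x hx => hk_ge x (by simp only [Set.mem_Ioi] at hx; linarith))]
      simp
    have hIoc : (∫ s in Set.Ioc r (r+1), k s) = g (r+1) - g r := by
      rw [← intervalIntegral.integral_of_le (by linarith : r ≤ r + 1)]
      have := intervalIntegral.integral_add_adjacent_intervals (a := 0) (b := r) (c := r+1)
        (hkint.intervalIntegrable) (hkint.intervalIntegrable)
      simp only [hg_def]
      linarith [this]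
    rw [hsplit, hz, hIoc, hg1 (r+1) (by linarith)]
    ring
  -- ktilde r = 0 for r < 0 and g r = 0 for r ≤ 0
  have hkt_neg : ∀ r : ℝ, r < 0 → ktilde r = 0 := fun r hr => by rw [hkt r, if_pos hr]
  -- integrability of s ↦ h s * g (τ - s) on Ioi (-1)
  have hInt_hg : ∀ τ : ℝ, -1 < τ → IntegrableOn (fun s => h s * g (τ - s)) (Set.Ioi (-1:ℝ)) := by
    intro τ hτ
    have hU : Set.Ioc (-1:ℝ) τ ∪ Set.Ioi τ = Set.Ioi (-1:ℝ) :=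
      Set.Ioc_union_Ioi_eq_Ioi hτ.le
    rw [← hU]
    apply MeasureTheory.IntegrableOn.union
    · apply (ContinuousOn.integrableOn_Icc _).mono_set Set.Ioc_subset_Icc_self
      exact ((hh.mono (Set.Icc_subset_Ici_self.trans (by simp))).mul
        ((hg_cont.comp (continuous_const.sub continuous_id)).continuousOn))
    · rw [integrableOn_congr_fun (g := fun _ => (0:ℝ)) _ measurableSet_Ioi]
      · exact integrableOn_zero
      · intro x hx
        simp only [Set.mem_Ioi] at hx
        simp [hg0 (τ - x) (by linarith)]
  -- h is integrable on relevant intervals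
  have hInt_h : ∀ x : ℝ, IntegrableOn h (Set.Icc (-1:ℝ) x) :=
    fun x => (hh.mono (Set.Icc_subset_Ici_self)).integrableOn_Icc
  -- the first-term reduction: for -1 < τ ≤ t+1,
  -- ∫_{Ioi(-1)} h s * g (τ-s) = ∫_{-1}^{t+1} h s * g (τ-s)
  have hG_eq : ∀ τ : ℝ, -1 < τ → τ ≤ t + 1 →
      (∫ s in Set.Ioi (-1:ℝ), h s * g (τ - s))
        = ∫ s in (-1:ℝ)..(t+1), h s * g (τ - s) := by
    intro τ hτ hτ'
    have hU : Set.Ioc (-1:ℝ) (t+1) ∪ Set.Ioi (t+1) = Set.Ioi (-1:ℝ) :=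
      Set.Ioc_union_Ioi_eq_Ioi (by linarith)
    have hz : (∫ s in Set.Ioi (t+1), h s * g (τ - s)) = 0 := by
      rw [MeasureTheory.setIntegral_congr_fun measurableSet_Ioi
        (g := fun _ => (0:ℝ))]
      · simp
      · intro x hx
        simp only [Set.mem_Ioi] at hx
        simp [hg0 (τ - x) (by linarith)]
    rw [intervalIntegral.integral_of_le (by linarith : (-1:ℝ) ≤ t+1), ← hU,
      MeasureTheory.setIntegral_union (Set.Ioc_disjoint_Ioi le_rfl) measurableSet_Ioi
        (((hInt_hg τ hτ).mono_set (by rw [← hU]; exact Set.subset_union_left)))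
        (((hInt_hg τ hτ).mono_set (by rw [← hU]; exact Set.subset_union_right))),
      hz, add_zero]
  -- key identity: for 0 < τ < t+1 the function equals Φ τ
  have key : ∀ τ ∈ Set.Ioo (0:ℝ) (t+1),
      (∫ s in Set.Ioi (-1:ℝ), h s * ktilde (τ - s))
        = (∫ s in (-1:ℝ)..(t+1), h s * g (τ - s)) - ∫ s in (-1:ℝ)..τ, h s := by
    intro τ hτ
    obtain ⟨hτ0, hτ1⟩ := hτ
    have hτ' : (-1:ℝ) < τ := by linarith
    have hpt : ∀ s ∈ Set.Ioi (-1:ℝ),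
        h s * ktilde (τ - s)
          = h s * g (τ - s) - Set.indicator (Set.Ioc (-1:ℝ) τ) h s := by
      intro s hs
      simp only [Set.mem_Ioi] at hs
      by_cases hc : s ≤ τ
      · rw [hkt_nonneg (τ - s) (by linarith),
          Set.indicator_of_mem (Set.mem_Ioc.2 ⟨hs, hc⟩)]
        ring
      · push_neg at hc
        rw [hkt_neg (τ - s) (by linarith), hg0 (τ - s) (by linarith),
          Set.indicator_of_notMem (by simp [Set.mem_Ioc]; intro _; linarith)]
        ring
    rw [MeasureTheory.setIntegral_congr_fun measurableSet_Ioi hpt]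
    have hIndInt : IntegrableOn (Set.indicator (Set.Ioc (-1:ℝ) τ) h) (Set.Ioi (-1:ℝ)) := by
      apply Integrable.integrableOn
      exact (((hInt_h τ).mono_set Set.Ioc_subset_Icc_self).integrable_indicator
        measurableSet_Ioc)
    rw [MeasureTheory.integral_sub (hInt_hg τ hτ') hIndInt]
    congr 1
    · exact hG_eq τ hτ' hτ1.le
    · rw [MeasureTheory.setIntegral_indicator measurableSet_Ioc,
        Set.inter_eq_self_of_subset_right (Set.Ioc_subset_Ioi_self),
        intervalIntegral.integral_of_le (by linarith : (-1:ℝ) ≤ τ)]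
  -- bound for k
  obtain ⟨C, hC⟩ := hkcs.exists_bound_of_continuous hk_cont
  -- derivative of the first term, by differentiation under the integral sign
  have D1 : HasDerivAt (fun τ => ∫ s in (-1:ℝ)..(t+1), h s * g (τ - s))
      (∫ s in (-1:ℝ)..(t+1), h s * k (t - s)) t := by
    have hhm : AEStronglyMeasurable h (volume.restrict (Set.uIoc (-1:ℝ) (t+1))) := by
      have : Set.uIoc (-1:ℝ) (t+1) ⊆ Set.Ici (-1:ℝ) := by
        rw [Set.uIoc_of_le (by linarith)]
        exact Set.Ioc_subset_Icc_self.trans Set.Icc_subset_Ici_self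
      exact ((hh.mono this).aestronglyMeasurable measurableSet_uIoc)
    have := (intervalIntegral.hasDerivAt_integral_of_dominated_loc_of_deriv_le
      (F := fun τ s => h s * g (τ - s)) (F' := fun τ s => h s * k (τ - s))
      (x₀ := t) (a := -1) (b := t+1) (bound := fun s => |h s| * C)
      (s := Metric.ball t 1) (Metric.ball_mem_nhds t one_pos)
      (Filter.Eventually.of_forall fun x =>
        (hhm.mul ((hg_cont.comp (continuous_const.sub continuous_id)).aestronglyMeasurable)))
      ?_ (hhm.mul ((hk_cont.comp (continuous_const.sub continuous_id)).aestronglyMeasurable))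
      ?_ ?_ ?_)
    · exact this.2
    · -- integrability of F t
      apply ContinuousOn.intervalIntegrable
      rw [Set.uIcc_of_le (by linarith : (-1:ℝ) ≤ t+1)]
      exact (hh.mono Set.Icc_subset_Ici_self).mul
        ((hg_cont.comp (continuous_const.sub continuous_id)).continuousOn)
    · -- bound
      apply Filter.Eventually.of_forall
      intro s _ x _
      calc ‖h s * k (x - s)‖ = |h s| * ‖k (x-s)‖ := by
            rw [norm_mul]; rfl
        _ ≤ |h s| * C := by
            apply mul_le_mul_of_nonneg_left (hC _) (abs_nonneg _)
    · -- integrability of bound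
      apply ContinuousOn.intervalIntegrable
      rw [Set.uIcc_of_le (by linarith : (-1:ℝ) ≤ t+1)]
      exact ((hh.mono Set.Icc_subset_Ici_self).abs.mul continuousOn_const)
    · -- differentiability
      apply Filter.Eventually.of_forall
      intro s _ x _
      have : HasDerivAt (fun x => g (x - s)) (k (x - s)) x := by
        have := (hg_deriv (x - s)).comp x ((hasDerivAt_id x).sub_const s)
        simpa [Function.comp_def] using this
      simpa using this.const_mul (h s)
  -- derivative of the second term
  have D2 : HasDerivAt (fun τ => ∫ s in (-1:ℝ)..τ, h s) (h t) t := by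
    apply intervalIntegral.integral_hasDerivAt_right
    · exact (intervalIntegrable_iff_integrableOn_Ioc_of_le (by linarith : (-1:ℝ) ≤ t)).2
        ((hInt_h t).mono_set Set.Ioc_subset_Icc_self)
    · exact ⟨Set.Ici (-1:ℝ), Ici_mem_nhds (by linarith), hh.aestronglyMeasurable measurableSet_Ici⟩
    · exact hh.continuousAt (Ici_mem_nhds (by linarith))
  -- combine
  have hev : (fun τ => ∫ s in Set.Ioi (-1:ℝ), h s * ktilde (τ - s)) =ᶠ[𝓝 t]
      (fun τ => (∫ s in (-1:ℝ)..(t+1), h s * g (τ - s)) - ∫ s in (-1:ℝ)..τ, h s) := by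
    filter_upwards [Ioo_mem_nhds ht (by linarith : t < t+1)] with τ hτ
    exact key τ hτ
  have hfinal : (∫ s in (-1:ℝ)..(t+1), h s * k (t - s))
      = ∫ s in Set.Ioi (-1:ℝ), h s * k (t - s) := by
    have hU : Set.Ioc (-1:ℝ) (t+1) ∪ Set.Ioi (t+1) = Set.Ioi (-1:ℝ) :=
      Set.Ioc_union_Ioi_eq_Ioi (by linarith)
    have hz : (∫ s in Set.Ioi (t+1), h s * k (t - s)) = 0 := by
      rw [MeasureTheory.setIntegral_congr_fun measurableSet_Ioi (g := fun _ => (0:ℝ))]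
      · simp
      · intro x hx
        simp only [Set.mem_Ioi] at hx
        simp [hk_le (t - x) (by linarith)]
    have hIoc : IntegrableOn (fun s => h s * k (t - s)) (Set.Ioc (-1:ℝ) (t+1)) := by
      apply (ContinuousOn.integrableOn_Icc _).mono_set Set.Ioc_subset_Icc_self
      exact (hh.mono Set.Icc_subset_Ici_self).mul
        ((hk_cont.comp (continuous_const.sub continuous_id)).continuousOn)
    have hIoi : IntegrableOn (fun s => h s * k (t - s)) (Set.Ioi (t+1:ℝ)) := by
      rw [integrableOn_congr_fun (g := fun _ => (0:ℝ)) _ measurableSet_Ioi]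
      · exact integrableOn_zero
      · intro x hx
        simp only [Set.mem_Ioi] at hx
        simp [hk_le (t - x) (by linarith)]
    rw [intervalIntegral.integral_of_le (by linarith : (-1:ℝ) ≤ t+1), ← hU,
      MeasureTheory.setIntegral_union (Set.Ioc_disjoint_Ioi le_rfl) measurableSet_Ioi hIoc hIoi,
      hz, add_zero]
  have := (D1.sub D2).congr_of_eventuallyEq hev
  rwa [hfinal] at this
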